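/- Generalized Pythagorean inequality for Bregman divergences: with Φ, C, Z as above and π_x the Bregman projection of x onto Z, for all y ∈ Z one has d_Φ(y, π_x) ≤ d_Φ(y, x) - d_Φ(π_x, x). Equivalently, (∇Φ(π_x) - ∇Φ(x))·(y - π_x) ≥ 0 for all y ∈ Z. -/

import Mathlib

open Set
open scoped RealInnerProductSpace
open Filter Topology

/-- Gradient inequality at interior points. -/
lemma grad_ineq_interior {n : ℕ} {C : Set (EuclideanSpace ℝ (Fin n))}
    {Φ : EuclideanSpace ℝ (Fin n) → ℝ} {g : EuclideanSpace ℝ (Fin n) → EuclideanSpace ℝ (Fin n)}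
    (hC : Convex ℝ C) (hΦ : ConvexOn ℝ C Φ)
    (hg : ∀ x ∈ interior C, HasGradientAt Φ (g x) x)
    {z w : EuclideanSpace ℝ (Fin n)} (hz : z ∈ interior C) (hw : w ∈ C) :
    Φ z + ⟪g z, w - z⟫ ≤ Φ w := by
  set v := w - z with hv
  set φ : ℝ → ℝ := fun t => Φ (z + t • v) with hφ
  have hmem : ∀ t ∈ Icc (0:ℝ) 1, z + t • v ∈ C := fun t ht =>
    hC.add_smul_sub_mem (interior_subset hz) hw ht
  -- convexity of φ on Icc 0 1
  have hφconv : ConvexOn ℝ (Icc (0:ℝ) 1) φ := by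
    have : ConvexOn ℝ ((AffineMap.lineMap z w : ℝ →ᵃ[ℝ] _) ⁻¹' C)
        (Φ ∘ (AffineMap.lineMap z w : ℝ →ᵃ[ℝ] _)) := hΦ.comp_affineMap _
    have hline_eq : ∀ t : ℝ, (AffineMap.lineMap z w : ℝ →ᵃ[ℝ] _) t = z + t • v := by
      intro t
      rw [AffineMap.lineMap_apply_module, hv]
      module
    have heq : φ = Φ ∘ (AffineMap.lineMap z w : ℝ →ᵃ[ℝ] _) := by
      funext t
      simp [hφ, hline_eq t]
    rw [heq]
    exact this.subset (fun t ht => by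
      simp only [mem_preimage, hline_eq t]
      exact hmem t ht) (convex_Icc 0 1)
  have hline : HasDerivAt (fun t : ℝ => z + t • v) v 0 := by
    simpa using ((hasDerivAt_id (0:ℝ)).smul_const v).const_add z
  have hder : HasDerivAt φ ⟪g z, v⟫ 0 := by
    have hz' : z + (0:ℝ) • v = z := by simp
    have hF : HasFDerivAt Φ ((InnerProductSpace.toDual ℝ _) (g z)) ((fun t : ℝ => z + t • v) 0) := by
      simp only [zero_smul, add_zero]
      exact (hg z hz).hasFDerivAt
    have := hF.comp_hasDerivAt (0:ℝ) hline
    simp only [InnerProductSpace.toDual_apply_apply] at this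
    exact this
  have := hφconv.le_slope_of_hasDerivAt (by simp : (0:ℝ) ∈ Icc (0:ℝ) 1)
    (by simp : (1:ℝ) ∈ Icc (0:ℝ) 1) one_pos hder
  have hslope : slope φ 0 1 = Φ w - Φ z := by
    simp [slope, hφ, hv]
  rw [hslope] at this
  linarith

/-- Gradient inequality on all of C, via continuity. -/
lemma grad_ineq {n : ℕ} {C : Set (EuclideanSpace ℝ (Fin n))}
    {Φ : EuclideanSpace ℝ (Fin n) → ℝ} {g : EuclideanSpace ℝ (Fin n) → EuclideanSpace ℝ (Fin n)}
    (hC : Convex ℝ C) (hCint : (interior C).Nonempty) (hΦ : ConvexOn ℝ C Φ)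
    (hΦc : ContinuousOn Φ C)
    (hg : ∀ x ∈ interior C, HasGradientAt Φ (g x) x)
    (hgc : ContinuousOn g C)
    {z w : EuclideanSpace ℝ (Fin n)} (hz : z ∈ C) (hw : w ∈ C) :
    Φ z + ⟪g z, w - z⟫ ≤ Φ w := by
  obtain ⟨c₀, hc₀⟩ := hCint
  set ζ : ℝ → EuclideanSpace ℝ (Fin n) := fun θ => z + θ • (c₀ - z) with hζ
  have hkey : ∀ θ ∈ Ioc (0:ℝ) 1, Φ (ζ θ) + ⟪g (ζ θ), w - ζ θ⟫ ≤ Φ w := fun θ hθ =>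
    grad_ineq_interior hC hΦ hg (hC.add_smul_sub_mem_interior hz hc₀ hθ) hw
  have hL : Filter.Tendsto ζ (nhdsWithin 0 (Ioi 0)) (𝓝 z) := by
    have : Continuous ζ := by continuity
    have h0 : ζ 0 = z := by simp [hζ]
    exact h0 ▸ (this.tendsto 0).mono_left nhdsWithin_le_nhds
  have hmemC : ∀ᶠ θ in nhdsWithin 0 (Ioi 0), ζ θ ∈ C := by
    filter_upwards [Ioc_mem_nhdsGT zero_lt_one] with θ hθ
    exact interior_subset (hC.add_smul_sub_mem_interior hz hc₀ hθ)
  have hLC : Filter.Tendsto ζ (nhdsWithin 0 (Ioi 0)) (nhdsWithin z C) :=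
    tendsto_nhdsWithin_iff.mpr ⟨hL, hmemC⟩
  have hΦt : Filter.Tendsto (fun θ => Φ (ζ θ)) (nhdsWithin 0 (Ioi 0)) (𝓝 (Φ z)) :=
    (hΦc z hz).tendsto.comp hLC
  have hgt : Filter.Tendsto (fun θ => g (ζ θ)) (nhdsWithin 0 (Ioi 0)) (𝓝 (g z)) :=
    (hgc z hz).tendsto.comp hLC
  have hinner : Filter.Tendsto (fun θ => Φ (ζ θ) + ⟪g (ζ θ), w - ζ θ⟫)
      (nhdsWithin 0 (Ioi 0)) (𝓝 (Φ z + ⟪g z, w - z⟫)) := by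
    exact hΦt.add ((Filter.Tendsto.inner hgt (tendsto_const_nhds.sub hL)))
  refine le_of_tendsto hinner ?_
  filter_upwards [Ioc_mem_nhdsGT zero_lt_one] with θ hθ
  exact hkey θ hθ

theorem stmt_13 {n : ℕ} (C Z : Set (EuclideanSpace ℝ (Fin n)))
    (Φ : EuclideanSpace ℝ (Fin n) → ℝ) (g : EuclideanSpace ℝ (Fin n) → EuclideanSpace ℝ (Fin n))
    (hC : Convex ℝ C) (hCint : (interior C).Nonempty)
    (hΦ : StrictConvexOn ℝ C Φ) (hΦc : ContinuousOn Φ C)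
    (hg : ∀ x ∈ interior C, HasGradientAt Φ (g x) x)
    (hgc : ContinuousOn g C)
    (hZC : Z ⊆ C) (hZne : Z.Nonempty) (hZconv : Convex ℝ Z) (hZcpt : IsCompact Z)
    (x : EuclideanSpace ℝ (Fin n)) (hx : x ∈ C)
    (π : EuclideanSpace ℝ (Fin n)) (hπZ : π ∈ Z)
    (hπmin : ∀ y ∈ Z, Φ π - Φ x - ⟪g x, π - x⟫ ≤ Φ y - Φ x - ⟪g x, y - x⟫) :
    ∀ y ∈ Z,
      Φ y - Φ π - ⟪g π, y - π⟫ ≤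
        (Φ y - Φ x - ⟪g x, y - x⟫) - (Φ π - Φ x - ⟪g x, π - x⟫) ∧
      0 ≤ ⟪g π - g x, y - π⟫ := by
  intro y hy
  set v := y - π with hv
  set ζ : ℝ → EuclideanSpace ℝ (Fin n) := fun t => π + t • v with hζ
  have hζZ : ∀ t ∈ Icc (0:ℝ) 1, ζ t ∈ Z := fun t ht => hZconv.add_smul_sub_mem hπZ hy ht
  -- for each t ∈ (0,1], ⟪g x, v⟫ ≤ ⟪g (ζ t), v⟫
  have hstep : ∀ t ∈ Ioc (0:ℝ) 1, ⟪g x, v⟫ ≤ ⟪g (ζ t), v⟫ := by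
    intro t ht
    have htZ : ζ t ∈ Z := hζZ t ⟨ht.1.le, ht.2⟩
    have h1 := hπmin (ζ t) htZ
    have h2 := grad_ineq hC hCint hΦ.convexOn hΦc hg hgc (hZC htZ) (hZC hπZ)
    -- h2 : Φ (ζ t) + ⟪g (ζ t), π - ζ t⟫ ≤ Φ π
    have e1 : ⟪g x, ζ t - x⟫ - ⟪g x, π - x⟫ = t * ⟪g x, v⟫ := by
      rw [← inner_sub_right]
      have : ζ t - x - (π - x) = t • v := by
        show π + t • v - x - (π - x) = t • v
        abel
      rw [this, real_inner_smul_right]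
    have e2 : ⟪g (ζ t), π - ζ t⟫ = -(t * ⟪g (ζ t), v⟫) := by
      have : π - ζ t = -(t • v) := by simp [hζ]
      rw [this, inner_neg_right, real_inner_smul_right]
    have ht0 : 0 < t := ht.1
    nlinarith [h1, h2, e1, e2]
  have hL : Filter.Tendsto ζ (nhdsWithin 0 (Ioi 0)) (𝓝 π) := by
    have : Continuous ζ := by continuity
    have h0 : ζ 0 = π := by simp [hζ]
    exact h0 ▸ (this.tendsto 0).mono_left nhdsWithin_le_nhds
  have hmemC : ∀ᶠ t in nhdsWithin 0 (Ioi 0), ζ t ∈ C := by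
    filter_upwards [Ioc_mem_nhdsGT zero_lt_one] with t ht
    exact hZC (hζZ t ⟨ht.1.le, ht.2⟩)
  have hLC : Filter.Tendsto ζ (nhdsWithin 0 (Ioi 0)) (nhdsWithin π C) :=
    tendsto_nhdsWithin_iff.mpr ⟨hL, hmemC⟩
  have hgt : Filter.Tendsto (fun t => ⟪g (ζ t), v⟫) (nhdsWithin 0 (Ioi 0)) (𝓝 ⟪g π, v⟫) :=
    Filter.Tendsto.inner ((hgc π (hZC hπZ)).tendsto.comp hLC) tendsto_const_nhds
  have hfin : ⟪g x, v⟫ ≤ ⟪g π, v⟫ := by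
    refine ge_of_tendsto hgt ?_
    filter_upwards [Ioc_mem_nhdsGT zero_lt_one] with t ht
    exact hstep t ht
  have hsub : ⟪g π - g x, v⟫ = ⟪g π, v⟫ - ⟪g x, v⟫ := inner_sub_left _ _ _
  have hxsplit : ⟪g x, y - x⟫ - ⟪g x, π - x⟫ = ⟪g x, v⟫ := by
    rw [← inner_sub_right]
    congr 1
    rw [hv]
    abel
  constructor
  · linarith
  · linarith
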